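/- G_{Π_0}(A_1,A_2) ∩ Iso(A_1,A_2) is 2-local reflexive in the set of all maps from A_1 to A_2: every map T : A_1 → A_2 that is 2-local in G_{Π_0}(A_1,A_2) ∩ Iso(A_1,A_2) belongs to G_{Π_0}(A_1,A_2) ∩ Iso(A_1,A_2); in particular T is a surjective isometry and has the form T(f) = T(0) + α·[f∘π]^ε (f ∈ A_1) for some α ∈ ℂ with |α| = 1, π ∈ Π_0 and ε ∈ {1,−1}. -/

import Mathlib

/-- `[f]^ε`: the function itself if `ε = 1`, its pointwise complex conjugate otherwise. -/
noncomputable def epow {X : Type*} [TopologicalSpace X] (ε : ℤ) (f : C(X, ℂ)) : C(X, ℂ) :=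
  if ε = 1 then f else star f

/-- `f ∈ C([0,1])` is continuously differentiable on `[0,1]`. -/
def IsC1 (f : C(unitInterval, ℂ)) : Prop :=
  ∃ g : ℝ → ℂ, ContDiffOn ℝ 1 g (Set.Icc 0 1) ∧ ∀ t : unitInterval, f t = g t

/-- `Π₀ = {π₀, π₁}` where `π₀` is the identity of `[0,1]` and `π₁(t) = 1 - t`. -/
noncomputable def Pi0 : Set (unitInterval ≃ₜ unitInterval) :=
  {Homeomorph.refl unitInterval, unitInterval.symmHomeomorph}

noncomputable def ee (ε : ℤ) (z : ℂ) : ℂ := if ε = 1 then z else (starRingEnd ℂ) z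

lemma ee_zero (ε : ℤ) : ee ε 0 = 0 := by unfold ee; split <;> simp

lemma ee_sub (ε : ℤ) (x y : ℂ) : ee ε (x - y) = ee ε x - ee ε y := by
  unfold ee; split <;> simp

lemma ee_real (ε : ℤ) (t : ℝ) (z : ℂ) : ee ε ((t:ℂ) * z) = (t:ℂ) * ee ε z := by
  unfold ee; split <;> simp [Complex.conj_ofReal]

lemma ee_eq_zero_iff (ε : ℤ) (z : ℂ) : ee ε z = 0 ↔ z = 0 := by
  unfold ee; split <;> simp

lemma ee_abs (ε : ℤ) (z : ℂ) : ‖ee ε z‖ = ‖z‖ := by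
  unfold ee; split
  · rfl
  · exact Complex.norm_conj z

lemma ee_mul_conj (ε : ℤ) (z : ℂ) :
    ee ε z * (starRingEnd ℂ) (ee ε z) = (Complex.normSq z : ℂ) := by
  unfold ee; split
  · exact Complex.mul_conj z
  · rw [Complex.conj_conj, mul_comm]
    exact Complex.mul_conj z

lemma mul_conj_one {β : ℂ} (h : ‖β‖ = 1) : β * (starRingEnd ℂ) β = 1 := by
  rw [Complex.mul_conj]
  norm_cast
  simp [Complex.normSq_eq_norm_sq, h]

lemma eq_of_mul_conj_eq_zero {x : ℂ} (h : x * (starRingEnd ℂ) x = 0) : x = 0 := by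
  have h1 := Complex.mul_conj x
  rw [h] at h1
  have h2 : Complex.normSq x = 0 := by exact_mod_cast h1.symm
  exact Complex.normSq_eq_zero.mp h2

lemma epow_apply {X : Type*} [TopologicalSpace X] (ε : ℤ) (f : C(X, ℂ)) (p : X) :
    epow ε f p = ee ε (f p) := by
  unfold epow ee; split <;> simp

lemma quad0 {c2 c1 c0 : ℂ} {t1 t2 t3 : ℂ} (h12 : t1 ≠ t2) (h13 : t1 ≠ t3) (h23 : t2 ≠ t3)
    (e1 : c2 * t1 ^ 2 + c1 * t1 + c0 = 0) (e2 : c2 * t2 ^ 2 + c1 * t2 + c0 = 0)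
    (e3 : c2 * t3 ^ 2 + c1 * t3 + c0 = 0) : c2 = 0 ∧ c1 = 0 ∧ c0 = 0 := by
  have d12 : c2 * (t1 + t2) + c1 = 0 := by
    have h : (t1 - t2) * (c2 * (t1 + t2) + c1) = 0 := by linear_combination e1 - e2
    rcases mul_eq_zero.mp h with h | h
    · exact absurd (sub_eq_zero.mp h) h12
    · exact h
  have d13 : c2 * (t1 + t3) + c1 = 0 := by
    have h : (t1 - t3) * (c2 * (t1 + t3) + c1) = 0 := by linear_combination e1 - e3
    rcases mul_eq_zero.mp h with h | h
    · exact absurd (sub_eq_zero.mp h) h13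
    · exact h
  have hc2 : c2 = 0 := by
    have h : (t2 - t3) * c2 = 0 := by linear_combination d12 - d13
    rcases mul_eq_zero.mp h with h | h
    · exact absurd (sub_eq_zero.mp h) h23
    · exact h
  have hc1 : c1 = 0 := by linear_combination d12 - (t1 + t2) * hc2
  refine ⟨hc2, hc1, by linear_combination e1 - t1 ^ 2 * hc2 - t1 * hc1⟩

lemma bool3 (b : Fin 5 → Bool) : ∃ i j k : Fin 5, i < j ∧ j < k ∧ b i = b j ∧ b j = b k := by
  revert b; decide

lemma int_pm_eq {x y : ℤ} (hx : x = 1 ∨ x = -1) (hy : y = 1 ∨ y = -1)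
    (h : (x = 1) ↔ (y = 1)) : x = y := by
  rcases hx with h1 | h1 <;> rcases hy with h2 | h2 <;> simp [h1, h2] at h ⊢

noncomputable def gg : C(unitInterval, ℂ) :=
  ⟨fun p => ((p:ℝ):ℂ) + ((p:ℝ):ℂ)^2 * Complex.I, by fun_prop⟩

noncomputable def hh : C(unitInterval, ℂ) :=
  ⟨fun p => ((1 - (p:ℝ) :ℝ):ℂ) + ((1 - (p:ℝ):ℝ):ℂ)^2 * Complex.I, by fun_prop⟩

lemma contdiff_aux : ContDiff ℝ 1 (fun t : ℝ => ((t:ℂ) + (t:ℂ)^2 * Complex.I)) := by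
  have h1 : ContDiff ℝ 1 (fun t : ℝ => (t:ℂ)) := Complex.ofRealCLM.contDiff
  exact h1.add (((h1.pow 2)).mul contDiff_const)

lemma gg_C1 : IsC1 gg :=
  ⟨fun t : ℝ => ((t:ℂ) + (t:ℂ)^2 * Complex.I), contdiff_aux.contDiffOn, fun t => rfl⟩

lemma hh_C1 : IsC1 hh := by
  refine ⟨fun t : ℝ => ((1:ℂ) - (t:ℂ)) + ((1:ℂ) - (t:ℂ))^2 * Complex.I, ?_, fun t => ?_⟩
  · have h1 : ContDiff ℝ 1 (fun t : ℝ => (1:ℂ) - (t:ℂ)) :=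
      contDiff_const.sub Complex.ofRealCLM.contDiff
    exact (h1.add ((h1.pow 2).mul contDiff_const)).contDiffOn
  · show ((1 - (t:ℝ):ℝ):ℂ) + ((1 - (t:ℝ):ℝ):ℂ)^2 * Complex.I = _
    push_cast
    ring

noncomputable def mid : unitInterval := ⟨1/2, by norm_num⟩

lemma gg_zero : gg 0 = 0 := by simp [gg]

lemma gg_one : gg 1 = 1 + Complex.I := by simp [gg]

lemma gg_mid : gg mid = 1/2 + Complex.I/4 := by
  show ((1/2:ℝ):ℂ) + ((1/2:ℝ):ℂ)^2 * Complex.I = 1/2 + Complex.I/4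
  push_cast; ring

lemma hh_zero : hh 0 = 1 + Complex.I := by simp [hh]

lemma hh_one : hh 1 = 0 := by simp [hh]

lemma hh_mid : hh mid = 1/2 + Complex.I/4 := by
  show ((1 - 1/2:ℝ):ℂ) + ((1 - 1/2:ℝ):ℂ)^2 * Complex.I = 1/2 + Complex.I/4
  push_cast; norm_num; ring

lemma gg_eq_zero {x : unitInterval} (h : gg x = 0) : x = 0 := by
  have hre := congrArg Complex.re h
  have hx : (x:ℝ) = 0 := by
    simpa [gg, Complex.add_re, Complex.mul_re, ← Complex.ofReal_pow] using hre
  exact Subtype.ext (by simp [hx])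

lemma hh_eq_zero {x : unitInterval} (h : hh x = 0) : x = 1 := by
  have hx : (1:ℝ) - (x:ℝ) = 0 := by
    have he : hh x = ((1-(x:ℝ):ℝ):ℂ) + (((1-(x:ℝ))^2 : ℝ):ℂ) * Complex.I := by
      show ((1 - (x:ℝ):ℝ):ℂ) + ((1 - (x:ℝ):ℝ):ℂ)^2 * Complex.I = _
      push_cast; ring
    rw [he] at h
    have hre := congrArg Complex.re h
    simpa [pow_two, Complex.add_re, Complex.mul_re, Complex.mul_im, Complex.sub_re,
      Complex.sub_im, Complex.add_im, Complex.ofReal_re, Complex.ofReal_im,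
      Complex.I_re, Complex.I_im] using hre
  have hx1 : (x:ℝ) = 1 := by linarith
  exact Subtype.ext (by simp [hx1])

lemma I01_zero_ne_one : (0 : unitInterval) ≠ 1 := by
  intro h
  have := congrArg (fun x : unitInterval => (x:ℝ)) h
  norm_num at this

lemma one_add_I_ne : (1 + Complex.I) ≠ 0 := by
  simp [Complex.ext_iff]

lemma planegeo (t : ℝ) (v u NS : ℂ)
    (hvc : v * (starRingEnd ℂ) v = (t:ℂ)^2 * NS)
    (huc : u * (starRingEnd ℂ) u = NS)
    (hvuc : (v - u) * (starRingEnd ℂ) (v - u) = ((t:ℂ) - 1)^2 * NS) :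
    v = (t:ℂ) * u := by
  have hvuc' : (v - u) * ((starRingEnd ℂ) v - (starRingEnd ℂ) u) = ((t:ℂ) - 1)^2 * NS := by
    rw [← map_sub]; exact hvuc
  have hkey : (v - (t:ℂ) * u) * (starRingEnd ℂ) (v - (t:ℂ) * u) = 0 := by
    simp only [map_sub, map_mul, Complex.conj_ofReal]
    linear_combination (1 - (t:ℂ)) * hvc + ((t:ℂ)^2 - (t:ℂ)) * huc + (t:ℂ) * hvuc'
  exact sub_eq_zero.mp (eq_of_mul_conj_eq_zero hkey)

lemma main_aux
    {A1 A2 : Submodule ℂ C(unitInterval, ℂ)}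
    (T : ↥A1 → ↥A2)
    (core : ∀ x y : ↥A1, ∃ β : ℂ, ∃ ρ ∈ Pi0, ∃ δ : ℤ, ‖β‖ = 1 ∧ (δ = 1 ∨ δ = -1) ∧
      ∀ p, (T x : C(unitInterval, ℂ)) p - (T y : C(unitInterval, ℂ)) p
          = β * ee δ ((x : C(unitInterval, ℂ)) ((ρ : C(unitInterval, unitInterval)) p)
                    - (y : C(unitInterval, ℂ)) ((ρ : C(unitInterval, unitInterval)) p)))
    (α0 : ℂ) (hα0 : ‖α0‖ = 1) (πs : unitInterval ≃ₜ unitInterval) (εs : ℤ)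
    (hεs : εs = 1 ∨ εs = -1)
    (w : ↥A1) (a' b' : unitInterval)
    (hW1 : ∀ p, (T w : C(unitInterval, ℂ)) p - (T 0 : C(unitInterval, ℂ)) p
          = α0 * ee εs ((w : C(unitInterval, ℂ)) ((πs : C(unitInterval, unitInterval)) p)))
    (hW2 : (w : C(unitInterval, ℂ)) ((πs : C(unitInterval, unitInterval)) a') = 0)
    (hW3 : (w : C(unitInterval, ℂ)) ((πs : C(unitInterval, unitInterval)) b') = 1 + Complex.I)
    (hW4 : (w : C(unitInterval, ℂ)) ((πs : C(unitInterval, unitInterval)) mid)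
          = 1/2 + Complex.I/4)
    (hW5 : ∀ ρ, ρ ∈ Pi0 → (w : C(unitInterval, ℂ)) ((ρ : C(unitInterval, unitInterval)) a') = 0
          ∨ (w : C(unitInterval, ℂ)) ((ρ : C(unitInterval, unitInterval)) b') = 0)
    (hW6 : ∀ ρ, ρ ∈ Pi0 → (w : C(unitInterval, ℂ)) ((ρ : C(unitInterval, unitInterval)) a') = 0
          → ∀ p, (ρ : C(unitInterval, unitInterval)) p = (πs : C(unitInterval, unitInterval)) p)
    (hW7 : ∀ ρ, ρ ∈ Pi0 → (w : C(unitInterval, ℂ)) ((ρ : C(unitInterval, unitInterval)) a') = 0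
          ∨ (w : C(unitInterval, ℂ)) ((ρ : C(unitInterval, unitInterval)) a') = 1 + Complex.I)
    (hP4 : ∀ ρ, ρ ∈ Pi0 → (ρ : C(unitInterval, unitInterval)) a' = 0
          ∨ (ρ : C(unitInterval, unitInterval)) a' = 1)
    (f : ↥A1) :
    ∃ K : ℂ, ∀ p, (T f : C(unitInterval, ℂ)) p - (T 0 : C(unitInterval, ℂ)) p
      = α0 * ee εs ((f : C(unitInterval, ℂ)) ((πs : C(unitInterval, unitInterval)) p))
        + K * ee εs ((w : C(unitInterval, ℂ)) ((πs : C(unitInterval, unitInterval)) p)) := by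
  classical
  set D : ↥A1 → unitInterval → ℂ :=
    fun x p => (T x : C(unitInterval, ℂ)) p - (T 0 : C(unitInterval, ℂ)) p with hDdef
  have smul_app : ∀ (t : ℂ) (p : unitInterval),
      (((t • w : ↥A1) : C(unitInterval, ℂ))) p = t * (w : C(unitInterval, ℂ)) p := by
    intro t p
    simp
  have coreD : ∀ x y : ↥A1, ∃ β : ℂ, ∃ ρ ∈ Pi0, ∃ δ : ℤ, ‖β‖ = 1 ∧ (δ = 1 ∨ δ = -1) ∧
      ∀ p, D x p - D y p
          = β * ee δ ((x : C(unitInterval, ℂ)) ((ρ : C(unitInterval, unitInterval)) p)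
                    - (y : C(unitInterval, ℂ)) ((ρ : C(unitInterval, unitInterval)) p)) := by
    intro x y
    obtain ⟨β, ρ, hρ, δ, hβ, hδ, h⟩ := core x y
    exact ⟨β, ρ, hρ, δ, hβ, hδ, fun p => by
      simp only [hDdef]; rw [sub_sub_sub_cancel_right]; exact h p⟩
  have coreD0 : ∀ x : ↥A1, ∃ β : ℂ, ∃ ρ ∈ Pi0, ∃ δ : ℤ, ‖β‖ = 1 ∧ (δ = 1 ∨ δ = -1) ∧
      ∀ p, D x p = β * ee δ ((x : C(unitInterval, ℂ)) ((ρ : C(unitInterval, unitInterval)) p)) := by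
    intro x
    obtain ⟨β, ρ, hρ, δ, hβ, hδ, h⟩ := coreD x 0
    refine ⟨β, ρ, hρ, δ, hβ, hδ, fun p => ?_⟩
    have h0 : D (0 : ↥A1) p = 0 := by simp [hDdef]
    have := h p
    rw [h0, sub_zero] at this
    simpa using this
  have hDw : ∀ p, D w p
      = α0 * ee εs ((w : C(unitInterval, ℂ)) ((πs : C(unitInterval, unitInterval)) p)) := hW1
  have hne10 : α0 * ee εs (1 + Complex.I) ≠ 0 := by
    apply mul_ne_zero
    · intro h; rw [h] at hα0; simp at hα0
    · rw [Ne, ee_eq_zero_iff]; exact one_add_I_ne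
  -- Step B
  have stepB : ∀ t : ℝ, D ((t:ℂ) • w) a' = 0 := by
    intro t
    by_contra hc
    obtain ⟨β, ρ, hρ, δ, hβ, hδ, h1⟩ := coreD0 ((t:ℂ) • w)
    have h1' : ∀ p, D ((t:ℂ) • w) p
        = β * ee δ ((t:ℂ) * (w : C(unitInterval, ℂ)) ((ρ : C(unitInterval, unitInterval)) p)) :=
      fun p => by rw [h1 p, smul_app]
    have hwa : (w : C(unitInterval, ℂ)) ((ρ : C(unitInterval, unitInterval)) a') ≠ 0 := by
      intro h0
      exact hc (by rw [h1' a', h0, mul_zero, ee_zero, mul_zero])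
    have hwb : (w : C(unitInterval, ℂ)) ((ρ : C(unitInterval, unitInterval)) b') = 0 :=
      (hW5 ρ hρ).resolve_left hwa
    have hDb : D ((t:ℂ) • w) b' = 0 := by rw [h1' b', hwb, mul_zero, ee_zero, mul_zero]
    obtain ⟨β', ρ', hρ', δ', hβ', hδ', h2⟩ := coreD ((t:ℂ) • w) w
    have h2' : ∀ p, D ((t:ℂ) • w) p - D w p
        = β' * ee δ' (((t:ℂ) - 1)
            * (w : C(unitInterval, ℂ)) ((ρ' : C(unitInterval, unitInterval)) p)) := by
      intro p
      rw [h2 p, smul_app]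
      congr 1
      congr 1
      ring
    have hb2 := h2' b'
    rw [hDb, hDw b', hW3, zero_sub] at hb2
    have hwb' : (w : C(unitInterval, ℂ)) ((ρ' : C(unitInterval, unitInterval)) b') ≠ 0 := by
      intro h0
      rw [h0, mul_zero, ee_zero, mul_zero] at hb2
      exact hne10 (by linear_combination -hb2)
    have hwa' : (w : C(unitInterval, ℂ)) ((ρ' : C(unitInterval, unitInterval)) a') = 0 :=
      (hW5 ρ' hρ').resolve_right hwb'
    have ha2 := h2' a'
    rw [hwa', mul_zero, ee_zero, mul_zero, hDw a', hW2, ee_zero, mul_zero, sub_zero] at ha2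
    exact hc ha2
  -- Step C
  have stepC : ∀ (t : ℝ) (p : unitInterval), D ((t:ℂ) • w) p
      = (t:ℂ) * (α0 * ee εs ((w : C(unitInterval, ℂ)) ((πs : C(unitInterval, unitInterval)) p))) := by
    intro t
    by_cases ht0 : t = 0
    · intro p
      subst ht0
      have : ((0:ℝ):ℂ) • w = (0 : ↥A1) := by norm_num
      rw [this]
      simp [hDdef]
    by_cases ht1 : t = 1
    · intro p
      subst ht1
      have : ((1:ℝ):ℂ) • w = w := by norm_num
      rw [this, hDw p]
      norm_num
    obtain ⟨β, ρ, hρ, δ, hβ, hδ, h1⟩ := coreD0 ((t:ℂ) • w)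
    have h1' : ∀ p, D ((t:ℂ) • w) p
        = β * ee δ ((t:ℂ) * (w : C(unitInterval, ℂ)) ((ρ : C(unitInterval, unitInterval)) p)) :=
      fun p => by rw [h1 p, smul_app]
    have hβ0 : β ≠ 0 := by intro h; rw [h] at hβ; simp at hβ
    have hwa : (w : C(unitInterval, ℂ)) ((ρ : C(unitInterval, unitInterval)) a') = 0 := by
      have ha := h1' a'
      rw [stepB t] at ha
      have := (mul_eq_zero.mp ha.symm).resolve_left hβ0
      have := (ee_eq_zero_iff _ _).mp this
      have := (mul_eq_zero.mp this).resolve_left (by exact_mod_cast ht0)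
      exact this
    have hρπ := hW6 ρ hρ hwa
    have h1'' : ∀ p, D ((t:ℂ) • w) p
        = β * ((t:ℂ) * ee δ ((w : C(unitInterval, ℂ)) ((πs : C(unitInterval, unitInterval)) p))) :=
      fun p => by rw [h1' p, hρπ p, ee_real]
    obtain ⟨β', ρ', hρ', δ', hβ', hδ', h2⟩ := coreD ((t:ℂ) • w) w
    have h2' : ∀ p, D ((t:ℂ) • w) p - D w p
        = β' * ee δ' (((t:ℂ) - 1)
            * (w : C(unitInterval, ℂ)) ((ρ' : C(unitInterval, unitInterval)) p)) := by
      intro p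
      rw [h2 p, smul_app]
      congr 2
      ring
    have hβ'0 : β' ≠ 0 := by intro h; rw [h] at hβ'; simp at hβ'
    have hwa' : (w : C(unitInterval, ℂ)) ((ρ' : C(unitInterval, unitInterval)) a') = 0 := by
      have ha := h2' a'
      rw [stepB t, hDw a', hW2, ee_zero, mul_zero, sub_zero] at ha
      have := (mul_eq_zero.mp ha.symm).resolve_left hβ'0
      have := (ee_eq_zero_iff _ _).mp this
      rcases mul_eq_zero.mp this with h | h
      · exfalso
        apply ht1
        have : (t:ℂ) = 1 := by linear_combination h
        exact_mod_cast this
      · exact h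
    have hρπ' := hW6 ρ' hρ' hwa'
    have h2'' : ∀ p, D ((t:ℂ) • w) p - D w p
        = β' * (((t:ℂ) - 1) * ee δ' ((w : C(unitInterval, ℂ)) ((πs : C(unitInterval, unitInterval)) p))) := by
      intro p
      rw [h2' p, hρπ' p]
      congr 1
      have : ((t:ℂ) - 1) = (((t - 1 : ℝ)):ℂ) := by push_cast; ring
      rw [this, ee_real]
    intro p
    have hveq := h1'' p
    have hueq := hDw p
    have hvueq := h2'' p
    rw [hueq] at hvueq
    set z := (w : C(unitInterval, ℂ)) ((πs : C(unitInterval, unitInterval)) p) with hz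
    have hβc := mul_conj_one hβ
    have hβ'c := mul_conj_one hβ'
    have hα0c := mul_conj_one hα0
    have hzδ := ee_mul_conj δ z
    have hzδ' := ee_mul_conj δ' z
    have hzε := ee_mul_conj εs z
    refine planegeo t _ _ (Complex.normSq z : ℂ) ?_ ?_ ?_
    · rw [hveq]
      simp only [map_mul, Complex.conj_ofReal]
      linear_combination ((t:ℂ))^2 * (ee δ z) * ((starRingEnd ℂ) (ee δ z)) * hβc
        + (t:ℂ)^2 * hzδ
    · simp only [map_mul]
      linear_combination (ee εs z) * ((starRingEnd ℂ) (ee εs z)) * hα0c + hzε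
    · rw [hvueq]
      simp only [map_mul, map_sub, Complex.conj_ofReal, map_one]
      linear_combination (((t:ℂ) - 1))^2 * (ee δ' z) * ((starRingEnd ℂ) (ee δ' z)) * hβ'c
        + ((t:ℂ) - 1)^2 * hzδ'
  -- Step D
  set Bf : ℝ := ‖(f : C(unitInterval, ℂ)) 0‖ + ‖(f : C(unitInterval, ℂ)) 1‖
    with hBf
  have hBf0 : 0 ≤ Bf := by positivity
  set M : ℝ := ‖D f a'‖ + Bf with hM
  have hM0 : 0 ≤ M := by positivity
  have hforce : ∀ t : ℝ, M < t → ∃ β δ, ‖β‖ = 1 ∧ (δ = 1 ∨ δ = -1) ∧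
      ∀ p, D f p - (t:ℂ) * (α0 * ee εs ((w : C(unitInterval, ℂ)) ((πs : C(unitInterval, unitInterval)) p)))
          = β * (ee δ ((f : C(unitInterval, ℂ)) ((πs : C(unitInterval, unitInterval)) p))
                - (t:ℂ) * ee δ ((w : C(unitInterval, ℂ)) ((πs : C(unitInterval, unitInterval)) p))) := by
    intro t ht
    obtain ⟨β, ρ, hρ, δ, hβ, hδ, h⟩ := coreD f ((t:ℂ) • w)
    have h' : ∀ p, D f p - D ((t:ℂ) • w) p
        = β * ee δ ((f : C(unitInterval, ℂ)) ((ρ : C(unitInterval, unitInterval)) p)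
              - (t:ℂ) * (w : C(unitInterval, ℂ)) ((ρ : C(unitInterval, unitInterval)) p)) :=
      fun p => by rw [h p, smul_app]
    have hwa : (w : C(unitInterval, ℂ)) ((ρ : C(unitInterval, unitInterval)) a') = 0 := by
      rcases hW7 ρ hρ with h0 | h0
      · exact h0
      · exfalso
        have ha := h' a'
        rw [stepB t, sub_zero, h0] at ha
        have habs := congrArg (‖·‖) ha
        rw [norm_mul, ee_abs] at habs
        have hβa : ‖β‖ = 1 := hβ
        rw [hβa, one_mul] at habs
        have h5 : ‖(f : C(unitInterval, ℂ)) ((ρ : C(unitInterval, unitInterval)) a')‖ ≤ Bf := by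
          rcases hP4 ρ hρ with h4 | h4 <;> rw [h4] <;> rw [hBf]
          · exact le_add_of_nonneg_right (by positivity)
          · exact le_add_of_nonneg_left (by positivity)
        have ht0 : 0 < t := lt_of_le_of_lt hM0 ht
        have h6 : t ≤ ‖(t:ℂ) * (1 + Complex.I)‖ := by
          rw [norm_mul, Complex.norm_real, Real.norm_eq_abs, abs_of_pos ht0]
          have h1 : (1:ℝ) ≤ ‖1 + Complex.I‖ := by
            have h2 := Complex.abs_re_le_norm (1 + Complex.I)
            simpa using h2
          nlinarith
        have h7 : ‖(f : C(unitInterval, ℂ)) ((ρ : C(unitInterval, unitInterval)) a')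
            - (t:ℂ) * (1 + Complex.I)‖ ≥ t - Bf := by
          have h8 : ‖(t:ℂ) * (1 + Complex.I)‖ - ‖(f : C(unitInterval, ℂ)) ((ρ : C(unitInterval, unitInterval)) a')‖
              ≤ ‖(t:ℂ) * (1 + Complex.I) - (f : C(unitInterval, ℂ)) ((ρ : C(unitInterval, unitInterval)) a')‖ :=
            norm_sub_norm_le _ _
          rw [norm_sub_rev] at h8
          linarith
        rw [hM] at ht
        linarith
    have hρπ := hW6 ρ hρ hwa
    refine ⟨β, δ, hβ, hδ, fun p => ?_⟩
    have hp := h' p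
    rw [hρπ p, stepC t p] at hp
    rw [hp, ee_sub, ee_real]
  -- the five parameters
  set tt : Fin 5 → ℝ := fun i => M + 1 + (i : ℕ) with htt
  have httM : ∀ i, M < tt i := by
    intro i
    have h0 : (0:ℝ) ≤ ((i:ℕ):ℝ) := Nat.cast_nonneg _
    simp only [htt]
    linarith
  choose βf δf hβf hδf hEq using fun i => hforce (tt i) (httM i)
  obtain ⟨i, j, k, hij, hjk, hb1, hb2⟩ := bool3 (fun i => decide (δf i = 1))
  have hδij : δf i = δf j := int_pm_eq (hδf i) (hδf j) (decide_eq_decide.mp hb1)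
  have hδjk : δf j = δf k := int_pm_eq (hδf j) (hδf k) (decide_eq_decide.mp hb2)
  have httne : ∀ m n : Fin 5, m < n → ((tt m : ℝ):ℂ) ≠ ((tt n : ℝ):ℂ) := by
    intro m n hmn
    have hlt : tt m < tt n := by
      have h1 : ((m:ℕ):ℝ) < ((n:ℕ):ℝ) := by exact_mod_cast hmn
      simp only [htt]
      linarith
    intro hcon
    rw [Complex.ofReal_inj] at hcon
    exact (ne_of_lt hlt) hcon
  set δh := δf i with hδh
  have Ei := hEq i
  have Ej := hEq j
  have Ek := hEq k
  rw [← hδij] at Ej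
  rw [← hδjk, ← hδij] at Ek
  have hco : ∀ p q : unitInterval,
      ((α0 * ee εs ((w : C(unitInterval, ℂ)) ((πs : C(unitInterval, unitInterval)) p))) * ee δh ((w : C(unitInterval, ℂ)) ((πs : C(unitInterval, unitInterval)) q)) - (α0 * ee εs ((w : C(unitInterval, ℂ)) ((πs : C(unitInterval, unitInterval)) q))) * ee δh ((w : C(unitInterval, ℂ)) ((πs : C(unitInterval, unitInterval)) p)) = 0) ∧
      (D f q * ee δh ((w : C(unitInterval, ℂ)) ((πs : C(unitInterval, unitInterval)) p)) + (α0 * ee εs ((w : C(unitInterval, ℂ)) ((πs : C(unitInterval, unitInterval)) q))) * ee δh ((f : C(unitInterval, ℂ)) ((πs : C(unitInterval, unitInterval)) p))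
        - D f p * ee δh ((w : C(unitInterval, ℂ)) ((πs : C(unitInterval, unitInterval)) q)) - (α0 * ee εs ((w : C(unitInterval, ℂ)) ((πs : C(unitInterval, unitInterval)) p))) * ee δh ((f : C(unitInterval, ℂ)) ((πs : C(unitInterval, unitInterval)) q)) = 0) ∧
      (D f p * ee δh ((f : C(unitInterval, ℂ)) ((πs : C(unitInterval, unitInterval)) q)) - D f q * ee δh ((f : C(unitInterval, ℂ)) ((πs : C(unitInterval, unitInterval)) p)) = 0) := by
    intro p q
    have e1 : ((α0 * ee εs ((w : C(unitInterval, ℂ)) ((πs : C(unitInterval, unitInterval)) p))) * ee δh ((w : C(unitInterval, ℂ)) ((πs : C(unitInterval, unitInterval)) q)) - (α0 * ee εs ((w : C(unitInterval, ℂ)) ((πs : C(unitInterval, unitInterval)) q))) * ee δh ((w : C(unitInterval, ℂ)) ((πs : C(unitInterval, unitInterval)) p)))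
          * ((tt i : ℝ):ℂ)^2
        + (D f q * ee δh ((w : C(unitInterval, ℂ)) ((πs : C(unitInterval, unitInterval)) p)) + (α0 * ee εs ((w : C(unitInterval, ℂ)) ((πs : C(unitInterval, unitInterval)) q))) * ee δh ((f : C(unitInterval, ℂ)) ((πs : C(unitInterval, unitInterval)) p))
          - D f p * ee δh ((w : C(unitInterval, ℂ)) ((πs : C(unitInterval, unitInterval)) q)) - (α0 * ee εs ((w : C(unitInterval, ℂ)) ((πs : C(unitInterval, unitInterval)) p))) * ee δh ((f : C(unitInterval, ℂ)) ((πs : C(unitInterval, unitInterval)) q))) * ((tt i : ℝ):ℂ)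
        + (D f p * ee δh ((f : C(unitInterval, ℂ)) ((πs : C(unitInterval, unitInterval)) q)) - D f q * ee δh ((f : C(unitInterval, ℂ)) ((πs : C(unitInterval, unitInterval)) p))) = 0 := by
      linear_combination (ee δh ((f : C(unitInterval, ℂ)) ((πs : C(unitInterval, unitInterval)) q)) - ((tt i : ℝ):ℂ) * ee δh ((w : C(unitInterval, ℂ)) ((πs : C(unitInterval, unitInterval)) q))) * (Ei p)
        - (ee δh ((f : C(unitInterval, ℂ)) ((πs : C(unitInterval, unitInterval)) p)) - ((tt i : ℝ):ℂ) * ee δh ((w : C(unitInterval, ℂ)) ((πs : C(unitInterval, unitInterval)) p))) * (Ei q)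
    have e2 : ((α0 * ee εs ((w : C(unitInterval, ℂ)) ((πs : C(unitInterval, unitInterval)) p))) * ee δh ((w : C(unitInterval, ℂ)) ((πs : C(unitInterval, unitInterval)) q)) - (α0 * ee εs ((w : C(unitInterval, ℂ)) ((πs : C(unitInterval, unitInterval)) q))) * ee δh ((w : C(unitInterval, ℂ)) ((πs : C(unitInterval, unitInterval)) p)))
          * ((tt j : ℝ):ℂ)^2
        + (D f q * ee δh ((w : C(unitInterval, ℂ)) ((πs : C(unitInterval, unitInterval)) p)) + (α0 * ee εs ((w : C(unitInterval, ℂ)) ((πs : C(unitInterval, unitInterval)) q))) * ee δh ((f : C(unitInterval, ℂ)) ((πs : C(unitInterval, unitInterval)) p))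
          - D f p * ee δh ((w : C(unitInterval, ℂ)) ((πs : C(unitInterval, unitInterval)) q)) - (α0 * ee εs ((w : C(unitInterval, ℂ)) ((πs : C(unitInterval, unitInterval)) p))) * ee δh ((f : C(unitInterval, ℂ)) ((πs : C(unitInterval, unitInterval)) q))) * ((tt j : ℝ):ℂ)
        + (D f p * ee δh ((f : C(unitInterval, ℂ)) ((πs : C(unitInterval, unitInterval)) q)) - D f q * ee δh ((f : C(unitInterval, ℂ)) ((πs : C(unitInterval, unitInterval)) p))) = 0 := by
      linear_combination (ee δh ((f : C(unitInterval, ℂ)) ((πs : C(unitInterval, unitInterval)) q)) - ((tt j : ℝ):ℂ) * ee δh ((w : C(unitInterval, ℂ)) ((πs : C(unitInterval, unitInterval)) q))) * (Ej p)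
        - (ee δh ((f : C(unitInterval, ℂ)) ((πs : C(unitInterval, unitInterval)) p)) - ((tt j : ℝ):ℂ) * ee δh ((w : C(unitInterval, ℂ)) ((πs : C(unitInterval, unitInterval)) p))) * (Ej q)
    have e3 : ((α0 * ee εs ((w : C(unitInterval, ℂ)) ((πs : C(unitInterval, unitInterval)) p))) * ee δh ((w : C(unitInterval, ℂ)) ((πs : C(unitInterval, unitInterval)) q)) - (α0 * ee εs ((w : C(unitInterval, ℂ)) ((πs : C(unitInterval, unitInterval)) q))) * ee δh ((w : C(unitInterval, ℂ)) ((πs : C(unitInterval, unitInterval)) p)))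
          * ((tt k : ℝ):ℂ)^2
        + (D f q * ee δh ((w : C(unitInterval, ℂ)) ((πs : C(unitInterval, unitInterval)) p)) + (α0 * ee εs ((w : C(unitInterval, ℂ)) ((πs : C(unitInterval, unitInterval)) q))) * ee δh ((f : C(unitInterval, ℂ)) ((πs : C(unitInterval, unitInterval)) p))
          - D f p * ee δh ((w : C(unitInterval, ℂ)) ((πs : C(unitInterval, unitInterval)) q)) - (α0 * ee εs ((w : C(unitInterval, ℂ)) ((πs : C(unitInterval, unitInterval)) p))) * ee δh ((f : C(unitInterval, ℂ)) ((πs : C(unitInterval, unitInterval)) q))) * ((tt k : ℝ):ℂ)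
        + (D f p * ee δh ((f : C(unitInterval, ℂ)) ((πs : C(unitInterval, unitInterval)) q)) - D f q * ee δh ((f : C(unitInterval, ℂ)) ((πs : C(unitInterval, unitInterval)) p))) = 0 := by
      linear_combination (ee δh ((f : C(unitInterval, ℂ)) ((πs : C(unitInterval, unitInterval)) q)) - ((tt k : ℝ):ℂ) * ee δh ((w : C(unitInterval, ℂ)) ((πs : C(unitInterval, unitInterval)) q))) * (Ek p)
        - (ee δh ((f : C(unitInterval, ℂ)) ((πs : C(unitInterval, unitInterval)) p)) - ((tt k : ℝ):ℂ) * ee δh ((w : C(unitInterval, ℂ)) ((πs : C(unitInterval, unitInterval)) p))) * (Ek q)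
    exact quad0 (httne i j hij) (httne i k (lt_trans hij hjk)) (httne j k hjk) e1 e2 e3
  have hα00 : α0 ≠ 0 := by intro h; rw [h] at hα0; simp at hα0
  have hδhpm : δh = 1 ∨ δh = -1 := hδf i
  have hδε : δh = εs := by
    rcases hδhpm with h1 | h1 <;> rcases hεs with h2 | h2
    · rw [h1, h2]
    · exfalso
      have hc2 := (hco b' mid).1
      rw [hW3, hW4, h1, h2] at hc2
      have e1 : ee (-1 : ℤ) (1 + Complex.I) = 1 - Complex.I := by
        simp only [ee, if_neg (by decide : ¬(-1 : ℤ) = 1)]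
        rw [map_add, map_one, Complex.conj_I]
        ring
      have e2 : ee (-1 : ℤ) (1/2 + Complex.I/4) = 1/2 - Complex.I/4 := by
        simp only [ee, if_neg (by decide : ¬(-1 : ℤ) = 1)]
        rw [show (1/2 + Complex.I/4 : ℂ) = ((1/2 : ℝ) : ℂ) + ((1/4 : ℝ):ℂ)*Complex.I by
          push_cast; ring]
        rw [map_add, map_mul, Complex.conj_ofReal, Complex.conj_ofReal, Complex.conj_I]
        push_cast; ring
      have e3 : ee (1 : ℤ) (1 + Complex.I) = 1 + Complex.I := by norm_num [ee]
      have e4 : ee (1 : ℤ) (1/2 + Complex.I/4) = 1/2 + Complex.I/4 := by norm_num [ee]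
      rw [e1, e2, e3, e4] at hc2
      have hI : α0 * Complex.I = 0 := by linear_combination (-2 : ℂ) * hc2
      rcases mul_eq_zero.mp hI with h | h
      · exact hα00 h
      · exact Complex.I_ne_zero h
    · exfalso
      have hc2 := (hco b' mid).1
      rw [hW3, hW4, h1, h2] at hc2
      have e1 : ee (-1 : ℤ) (1 + Complex.I) = 1 - Complex.I := by
        simp only [ee, if_neg (by decide : ¬(-1 : ℤ) = 1)]
        rw [map_add, map_one, Complex.conj_I]
        ring
      have e2 : ee (-1 : ℤ) (1/2 + Complex.I/4) = 1/2 - Complex.I/4 := by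
        simp only [ee, if_neg (by decide : ¬(-1 : ℤ) = 1)]
        rw [show (1/2 + Complex.I/4 : ℂ) = ((1/2 : ℝ) : ℂ) + ((1/4 : ℝ):ℂ)*Complex.I by
          push_cast; ring]
        rw [map_add, map_mul, Complex.conj_ofReal, Complex.conj_ofReal, Complex.conj_I]
        push_cast; ring
      have e3 : ee (1 : ℤ) (1 + Complex.I) = 1 + Complex.I := by norm_num [ee]
      have e4 : ee (1 : ℤ) (1/2 + Complex.I/4) = 1/2 + Complex.I/4 := by norm_num [ee]
      rw [e1, e2, e3, e4] at hc2 -- second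
      have hI : α0 * Complex.I = 0 := by linear_combination (2 : ℂ) * hc2
      rcases mul_eq_zero.mp hI with h | h
      · exact hα00 h
      · exact Complex.I_ne_zero h
    · rw [h1, h2]
  have hωne : ee εs (1 + Complex.I) ≠ 0 := by rw [Ne, ee_eq_zero_iff]; exact one_add_I_ne
  refine ⟨(D f b' - α0 * ee εs ((f : C(unitInterval, ℂ)) ((πs : C(unitInterval, unitInterval)) b'))) / ee εs (1 + Complex.I), fun p => ?_⟩
  have hc1 := (hco p b').2.1
  rw [hδε, hW3] at hc1
  show D f p = _
  simp only [ContinuousMap.coe_coe, hDdef] at hc1 ⊢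
  field_simp
  linear_combination -hc1

/-- `G_{Π₀}(A₁,A₂) ∩ Iso(A₁,A₂)` is 2-local reflexive in `M(A₁,A₂)`: every map
`T : A₁ → A₂` that is 2-local in `G_{Π₀}(A₁,A₂) ∩ Iso(A₁,A₂)` belongs to
`G_{Π₀}(A₁,A₂) ∩ Iso(A₁,A₂)`; in particular `T` is a surjective isometry of the form
`T(f) = T(0) + α·[f ∘ π]^ε`. -/
theorem stmt_6
    (A1 A2 : Submodule ℂ C(unitInterval, ℂ))
    -- `A_j` contains `C¹[0,1]`
    (hC1A1 : ∀ f : C(unitInterval, ℂ), IsC1 f → f ∈ A1)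
    (hC1A2 : ∀ f : C(unitInterval, ℂ), IsC1 f → f ∈ A2)
    -- `A_j` is conjugate closed
    (hstar1 : ∀ f ∈ A1, star f ∈ A1)
    (hstar2 : ∀ f ∈ A2, star f ∈ A2)
    -- the norms on `A_j`
    (N1 N2 : C(unitInterval, ℂ) → ℝ)
    (hN1add : ∀ f ∈ A1, ∀ g ∈ A1, N1 (f + g) ≤ N1 f + N1 g)
    (hN1smul : ∀ (c : ℂ), ∀ f ∈ A1, N1 (c • f) = ‖c‖ * N1 f)
    (hN1eq0 : ∀ f ∈ A1, (N1 f = 0 ↔ f = 0))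
    (hN1const : ∀ c : ℂ, N1 (ContinuousMap.const unitInterval c) = ‖c‖)
    (hN1star : ∀ f ∈ A1, N1 (star f) = N1 f)
    (hN2add : ∀ f ∈ A2, ∀ g ∈ A2, N2 (f + g) ≤ N2 f + N2 g)
    (hN2smul : ∀ (c : ℂ), ∀ f ∈ A2, N2 (c • f) = ‖c‖ * N2 f)
    (hN2eq0 : ∀ f ∈ A2, (N2 f = 0 ↔ f = 0))
    (hN2const : ∀ c : ℂ, N2 (ContinuousMap.const unitInterval c) = ‖c‖)
    (hN2star : ∀ f ∈ A2, N2 (star f) = N2 f)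
    (T : A1 → A2)
    -- `T` is 2-local in `G_{Π₀}(A₁,A₂) ∩ Iso(A₁,A₂)`
    (h2loc : ∀ f g : A1, ∃ S : A1 → A2,
      ((∃ lam : A2, ∃ α : ℂ, ‖α‖ = 1 ∧ ∃ π ∈ Pi0, ∃ ε ∈ ({1, -1} : Set ℤ),
          ∀ h : A1, (S h : C(unitInterval, ℂ)) =
            (lam : C(unitInterval, ℂ)) +
              α • epow ε ((h : C(unitInterval, ℂ)).comp (π : C(unitInterval, unitInterval)))) ∧
        (Function.Surjective S ∧
          ∀ u v : A1, N2 ((S u : C(unitInterval, ℂ)) - (S v : C(unitInterval, ℂ)))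
            = N1 ((u : C(unitInterval, ℂ)) - (v : C(unitInterval, ℂ))))) ∧
      T f = S f ∧ T g = S g) :
    -- `T ∈ G_{Π₀}(A₁,A₂)`
    (∃ lam : A2, ∃ α : ℂ, ‖α‖ = 1 ∧ ∃ π ∈ Pi0, ∃ ε ∈ ({1, -1} : Set ℤ),
      ∀ h : A1, (T h : C(unitInterval, ℂ)) =
        (lam : C(unitInterval, ℂ)) +
          α • epow ε ((h : C(unitInterval, ℂ)).comp (π : C(unitInterval, unitInterval)))) ∧
    -- `T ∈ Iso(A₁,A₂)`
    (Function.Surjective T ∧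
      ∀ u v : A1, N2 ((T u : C(unitInterval, ℂ)) - (T v : C(unitInterval, ℂ)))
        = N1 ((u : C(unitInterval, ℂ)) - (v : C(unitInterval, ℂ)))) ∧
    -- the form of `T`
    (∃ α : ℂ, ‖α‖ = 1 ∧ ∃ π ∈ Pi0, ∃ ε ∈ ({1, -1} : Set ℤ),
      ∀ f : A1, (T f : C(unitInterval, ℂ)) =
        (T 0 : C(unitInterval, ℂ)) +
          α • epow ε ((f : C(unitInterval, ℂ)).comp (π : C(unitInterval, unitInterval)))) := by
  classical
  have pi0cases : ∀ ρ : unitInterval ≃ₜ unitInterval, ρ ∈ Pi0 →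
      ρ = Homeomorph.refl unitInterval ∨ ρ = unitInterval.symmHomeomorph := by
    intro ρ h
    simpa [Pi0] using h
  -- core consequence of 2-locality
  have hcore : ∀ x y : ↥A1, ∃ β : ℂ, ∃ ρ ∈ Pi0, ∃ δ : ℤ, ‖β‖ = 1 ∧ (δ = 1 ∨ δ = -1) ∧
      ∀ p, (T x : C(unitInterval, ℂ)) p - (T y : C(unitInterval, ℂ)) p
          = β * ee δ ((x : C(unitInterval, ℂ)) ((ρ : C(unitInterval, unitInterval)) p)
                    - (y : C(unitInterval, ℂ)) ((ρ : C(unitInterval, unitInterval)) p)) := by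
    intro x y
    obtain ⟨S, ⟨⟨lam, α, hα, π, hπ, ε, hε, hform⟩, _, _⟩, hTx, hTy⟩ := h2loc x y
    have hε' : ε = 1 ∨ ε = -1 := by simpa using hε
    refine ⟨α, π, hπ, ε, hα, hε', fun p => ?_⟩
    rw [hTx, hTy, hform x, hform y]
    simp only [ContinuousMap.add_apply, ContinuousMap.smul_apply, ContinuousMap.comp_apply,
      epow_apply, smul_eq_mul]
    rw [ee_sub]
    ring
  -- the anchor G0 and the map S0
  set G0 : ↥A1 := ⟨gg, hC1A1 gg gg_C1⟩ with hG0
  set H0 : ↥A1 := ⟨hh, hC1A1 hh hh_C1⟩ with hH0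
  obtain ⟨S0, ⟨⟨lam, α0, hα0, πs, hπs, εs, hεs0, hform⟩, hsurj, hiso⟩, hTG, hT0⟩ := h2loc G0 0
  have hεs : εs = 1 ∨ εs = -1 := by simpa using hεs0
  have hlam : (T 0 : C(unitInterval, ℂ)) = (lam : C(unitInterval, ℂ)) := by
    rw [hT0, hform 0]
    ext p
    simp [epow_apply, ee_zero]
  have hW1g : ∀ p, (T G0 : C(unitInterval, ℂ)) p - (T 0 : C(unitInterval, ℂ)) p
      = α0 * ee εs (gg ((πs : C(unitInterval, unitInterval)) p)) := by
    intro p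
    rw [hTG, hform G0, hlam]
    simp only [ContinuousMap.add_apply, ContinuousMap.smul_apply, ContinuousMap.comp_apply,
      epow_apply, smul_eq_mul]
    have : ((G0 : C(unitInterval, ℂ))) ((πs : C(unitInterval, unitInterval)) p)
        = gg ((πs : C(unitInterval, unitInterval)) p) := rfl
    rw [this]
    ring
  -- the endpoints
  obtain ⟨a', b', hπa, hπb, hP4pair, hP5⟩ :
      ∃ a b : unitInterval, (πs : C(unitInterval, unitInterval)) a = 0 ∧
        (πs : C(unitInterval, unitInterval)) b = 1 ∧
        (∀ ρ, ρ ∈ Pi0 →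
          (((ρ : C(unitInterval, unitInterval)) a = 0 ∧ (ρ : C(unitInterval, unitInterval)) b = 1)
          ∨ ((ρ : C(unitInterval, unitInterval)) a = 1 ∧ (ρ : C(unitInterval, unitInterval)) b = 0))) ∧
        (∀ ρ, ρ ∈ Pi0 → (ρ : C(unitInterval, unitInterval)) a = 0 →
          ∀ p, (ρ : C(unitInterval, unitInterval)) p = (πs : C(unitInterval, unitInterval)) p) := by
    have hsym0 : unitInterval.symm 0 = 1 := unitInterval.symm_zero
    have hsym1 : unitInterval.symm 1 = 0 := unitInterval.symm_one
    rcases pi0cases πs hπs with h | h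
    · subst h
      refine ⟨0, 1, rfl, rfl, ?_, ?_⟩
      · intro ρ hρ
        rcases pi0cases ρ hρ with h | h <;> subst h
        · exact Or.inl ⟨rfl, rfl⟩
        · exact Or.inr ⟨hsym0, hsym1⟩
      · intro ρ hρ h0 p
        rcases pi0cases ρ hρ with h | h <;> subst h
        · rfl
        · exfalso
          have : unitInterval.symm 0 = 0 := h0
          rw [hsym0] at this
          exact I01_zero_ne_one this.symm
    · subst h
      refine ⟨1, 0, hsym1, hsym0, ?_, ?_⟩
      · intro ρ hρ
        rcases pi0cases ρ hρ with h | h <;> subst h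
        · exact Or.inr ⟨rfl, rfl⟩
        · exact Or.inl ⟨hsym1, hsym0⟩
      · intro ρ hρ h0 p
        rcases pi0cases ρ hρ with h | h <;> subst h
        · exfalso
          have : (1 : unitInterval) = 0 := h0
          exact I01_zero_ne_one this.symm
        · rfl
  have hmidπ : (πs : C(unitInterval, unitInterval)) mid = mid := by
    rcases pi0cases πs hπs with h | h <;> subst h
    · rfl
    · show unitInterval.symm mid = mid
      apply Subtype.ext
      rw [unitInterval.coe_symm_eq]
      show (1 : ℝ) - (1/2 : ℝ) = (1/2 : ℝ)
      norm_num
  -- instantiate main_aux with anchor gg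
  have hgga : gg ((πs : C(unitInterval, unitInterval)) a') = 0 := by rw [hπa]; exact gg_zero
  have hggb : gg ((πs : C(unitInterval, unitInterval)) b') = 1 + Complex.I := by
    rw [hπb]; exact gg_one
  have hggm : gg ((πs : C(unitInterval, unitInterval)) mid) = 1/2 + Complex.I/4 := by
    rw [hmidπ]; exact gg_mid
  have hW5g : ∀ ρ, ρ ∈ Pi0 → gg ((ρ : C(unitInterval, unitInterval)) a') = 0
      ∨ gg ((ρ : C(unitInterval, unitInterval)) b') = 0 := by
    intro ρ hρ
    rcases hP4pair ρ hρ with ⟨h1, h2⟩ | ⟨h1, h2⟩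
    · exact Or.inl (by rw [h1]; exact gg_zero)
    · exact Or.inr (by rw [h2]; exact gg_zero)
  have hW6g : ∀ ρ, ρ ∈ Pi0 → gg ((ρ : C(unitInterval, unitInterval)) a') = 0 →
      ∀ p, (ρ : C(unitInterval, unitInterval)) p = (πs : C(unitInterval, unitInterval)) p := by
    intro ρ hρ h0
    exact hP5 ρ hρ (gg_eq_zero h0)
  have hW7g : ∀ ρ, ρ ∈ Pi0 → gg ((ρ : C(unitInterval, unitInterval)) a') = 0
      ∨ gg ((ρ : C(unitInterval, unitInterval)) a') = 1 + Complex.I := by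
    intro ρ hρ
    rcases hP4pair ρ hρ with ⟨h1, h2⟩ | ⟨h1, h2⟩
    · exact Or.inl (by rw [h1]; exact gg_zero)
    · exact Or.inr (by rw [h1]; exact gg_one)
  have hP4g : ∀ ρ, ρ ∈ Pi0 → (ρ : C(unitInterval, unitInterval)) a' = 0
      ∨ (ρ : C(unitInterval, unitInterval)) a' = 1 := by
    intro ρ hρ
    rcases hP4pair ρ hρ with ⟨h1, _⟩ | ⟨h1, _⟩
    · exact Or.inl h1
    · exact Or.inr h1
  have mainG := fun x : ↥A1 =>
    main_aux T hcore α0 hα0 πs εs hεs G0 a' b' hW1g hgga hggb hggm hW5g hW6g hW7g hP4g x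
  -- value of T at the anchor hh
  have hne10 : α0 * ee εs (1 + Complex.I) ≠ 0 := by
    apply mul_ne_zero
    · intro h; rw [h] at hα0; simp at hα0
    · rw [Ne, ee_eq_zero_iff]; exact one_add_I_ne
  have hW1h : ∀ p, (T H0 : C(unitInterval, ℂ)) p - (T 0 : C(unitInterval, ℂ)) p
      = α0 * ee εs (hh ((πs : C(unitInterval, unitInterval)) p)) := by
    obtain ⟨KH, hKH⟩ := mainG H0
    obtain ⟨β, ρ, hρ, δ, hβ, hδ, hc⟩ := hcore H0 0
    have hc' : ∀ p, (T H0 : C(unitInterval, ℂ)) p - (T 0 : C(unitInterval, ℂ)) p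
        = β * ee δ (hh ((ρ : C(unitInterval, unitInterval)) p)) := by
      intro p
      have h := hc p
      simpa using h
    have hKHa := hKH a'
    have hH0a : ((H0 : C(unitInterval, ℂ))) ((πs : C(unitInterval, unitInterval)) a')
        = 1 + Complex.I := by
      show hh ((πs : C(unitInterval, unitInterval)) a') = 1 + Complex.I
      rw [hπa]; exact hh_zero
    have hG0a : ((G0 : C(unitInterval, ℂ))) ((πs : C(unitInterval, unitInterval)) a') = 0 := hgga
    rw [hH0a, hG0a, ee_zero, mul_zero, add_zero] at hKHa
    -- T H0 a' - T 0 a' = α0 * ee εs (1+I) ≠ 0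
    have hρb1 : (ρ : C(unitInterval, unitInterval)) b' = 1 := by
      rcases hP4pair ρ hρ with ⟨h1, h2⟩ | ⟨h1, h2⟩
      · exact h2
      · exfalso
        have := hc' a'
        rw [hKHa, h1, hh_one, ee_zero, mul_zero] at this
        exact hne10 this
    have hTH0b : (T H0 : C(unitInterval, ℂ)) b' - (T 0 : C(unitInterval, ℂ)) b' = 0 := by
      rw [hc' b', hρb1, hh_one, ee_zero, mul_zero]
    have hKHb := hKH b'
    have hH0b : ((H0 : C(unitInterval, ℂ))) ((πs : C(unitInterval, unitInterval)) b') = 0 := by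
      show hh ((πs : C(unitInterval, unitInterval)) b') = 0
      rw [hπb]; exact hh_one
    have hG0b : ((G0 : C(unitInterval, ℂ))) ((πs : C(unitInterval, unitInterval)) b')
        = 1 + Complex.I := hggb
    rw [hTH0b, hH0b, hG0b, ee_zero, mul_zero, zero_add] at hKHb
    have hKH0 : KH = 0 := by
      rcases mul_eq_zero.mp hKHb.symm with h | h
      · exact h
      · exact absurd h (by rw [Ne, ee_eq_zero_iff] at *; exact fun hh' => one_add_I_ne hh')
    intro p
    have := hKH p
    rw [hKH0, zero_mul, add_zero] at this
    exact this
  -- instantiate main_aux with anchor hh, endpoints swapped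
  have hhhb : hh ((πs : C(unitInterval, unitInterval)) b') = 0 := by rw [hπb]; exact hh_one
  have hhha : hh ((πs : C(unitInterval, unitInterval)) a') = 1 + Complex.I := by
    rw [hπa]; exact hh_zero
  have hhhm : hh ((πs : C(unitInterval, unitInterval)) mid) = 1/2 + Complex.I/4 := by
    rw [hmidπ]; exact hh_mid
  have hW5h : ∀ ρ, ρ ∈ Pi0 → hh ((ρ : C(unitInterval, unitInterval)) b') = 0
      ∨ hh ((ρ : C(unitInterval, unitInterval)) a') = 0 := by
    intro ρ hρ
    rcases hP4pair ρ hρ with ⟨h1, h2⟩ | ⟨h1, h2⟩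
    · exact Or.inl (by rw [h2]; exact hh_one)
    · exact Or.inr (by rw [h1]; exact hh_one)
  have hW6h : ∀ ρ, ρ ∈ Pi0 → hh ((ρ : C(unitInterval, unitInterval)) b') = 0 →
      ∀ p, (ρ : C(unitInterval, unitInterval)) p = (πs : C(unitInterval, unitInterval)) p := by
    intro ρ hρ h0
    have hb1 : (ρ : C(unitInterval, unitInterval)) b' = 1 := hh_eq_zero h0
    rcases hP4pair ρ hρ with ⟨h1, h2⟩ | ⟨h1, h2⟩
    · exact hP5 ρ hρ h1
    · exfalso
      rw [h2] at hb1
      exact I01_zero_ne_one hb1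
  have hW7h : ∀ ρ, ρ ∈ Pi0 → hh ((ρ : C(unitInterval, unitInterval)) b') = 0
      ∨ hh ((ρ : C(unitInterval, unitInterval)) b') = 1 + Complex.I := by
    intro ρ hρ
    rcases hP4pair ρ hρ with ⟨h1, h2⟩ | ⟨h1, h2⟩
    · exact Or.inl (by rw [h2]; exact hh_one)
    · exact Or.inr (by rw [h2]; exact hh_zero)
  have hP4h : ∀ ρ, ρ ∈ Pi0 → (ρ : C(unitInterval, unitInterval)) b' = 0
      ∨ (ρ : C(unitInterval, unitInterval)) b' = 1 := by
    intro ρ hρ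
    rcases hP4pair ρ hρ with ⟨_, h2⟩ | ⟨_, h2⟩
    · exact Or.inr h2
    · exact Or.inl h2
  have mainH := fun x : ↥A1 =>
    main_aux T hcore α0 hα0 πs εs hεs H0 b' a' hW1h hhhb hhha hhhm hW5h hW6h hW7h hP4h x
  -- the final formula
  have hfinal : ∀ (x : ↥A1) p, (T x : C(unitInterval, ℂ)) p
      = (T 0 : C(unitInterval, ℂ)) p
        + α0 * ee εs ((x : C(unitInterval, ℂ)) ((πs : C(unitInterval, unitInterval)) p)) := by
    intro x p
    obtain ⟨K, hK⟩ := mainG x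
    obtain ⟨K', hK'⟩ := mainH x
    have hb := hK b'
    have hb' := hK' b'
    have hG0c : ((G0 : C(unitInterval, ℂ))) ((πs : C(unitInterval, unitInterval)) b')
        = 1 + Complex.I := hggb
    have hH0c : ((H0 : C(unitInterval, ℂ))) ((πs : C(unitInterval, unitInterval)) b') = 0 := by
      show hh ((πs : C(unitInterval, unitInterval)) b') = 0
      exact hhhb
    rw [hG0c] at hb
    rw [hH0c, ee_zero, mul_zero, add_zero] at hb'
    have hKz : K * ee εs (1 + Complex.I) = 0 := by linear_combination hb' - hb
    have hK0 : K = 0 := by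
      rcases mul_eq_zero.mp hKz with h | h
      · exact h
      · exfalso
        rw [ee_eq_zero_iff] at h
        exact one_add_I_ne h
    have := hK p
    rw [hK0, zero_mul, add_zero] at this
    linear_combination this
  -- T equals S0
  have hTS : T = S0 := by
    funext x
    apply Subtype.ext
    apply ContinuousMap.ext
    intro p
    rw [hfinal x p, hform x, hlam]
    simp only [ContinuousMap.add_apply, ContinuousMap.smul_apply, ContinuousMap.comp_apply,
      epow_apply, smul_eq_mul]
  refine ⟨?_, ?_, ?_⟩
  · rw [hTS]
    exact ⟨lam, α0, hα0, πs, hπs, εs, hεs0, hform⟩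
  · constructor
    · rw [hTS]; exact hsurj
    · intro u v
      rw [hTS]
      exact hiso u v
  · refine ⟨α0, hα0, πs, hπs, εs, hεs0, fun x => ?_⟩
    ext p
    rw [hfinal x p]
    simp only [ContinuousMap.add_apply, ContinuousMap.smul_apply, ContinuousMap.comp_apply,
      epow_apply, smul_eq_mul]
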